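/- Let m be an integer and let G be the presented group ⟨a, b, c, d, x ∣ x·a⁻², x·b⁻², x·c⁻², x·d⁻², a·b·c·d·x^{−m}⟩. Then: (i) the element x is central in G; (ii) the subgroup N of G generated by ab, bc and x is a normal subgroup of index 2; and (iii) the commutator subgroup of N is contained in the cyclic subgroup generated by x, so N is solvable of derived length at most 2. -/

import Mathlib

private lemma stmt7_aux {H : Type*} [Group H] {A B C D : H}
    (hA : A * A = 1) (hB : B * B = 1) (hC : C * C = 1) (hD : D * D = 1)
    (hABCD : A * B * C * D = 1) :
    (A * B) * (B * C) = (B * C) * (A * B) := by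
  have hiA : A⁻¹ = A := inv_eq_of_mul_eq_one_left hA
  have hiB : B⁻¹ = B := inv_eq_of_mul_eq_one_left hB
  have hiC : C⁻¹ = C := inv_eq_of_mul_eq_one_left hC
  have hD' : D = (A * B * C)⁻¹ := eq_inv_of_mul_eq_one_right hABCD
  have habc : (A * B * C) * (A * B * C) = 1 := by
    calc (A * B * C) * (A * B * C) = ((A * B * C)⁻¹ * (A * B * C)⁻¹)⁻¹ := by group
      _ = (D * D)⁻¹ := by rw [← hD']
      _ = 1 := by rw [hD, inv_one]
  have hcab : (C * A * B) * (C * A * B) = 1 := by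
    calc (C * A * B) * (C * A * B) = C * ((A * B * C) * (A * B * C)) * C⁻¹ := by group
      _ = 1 := by rw [habc]; group
  have e3 : C * A * B = B * A * C := by
    have e1 : C * A * B = (C * A * B)⁻¹ := eq_inv_of_mul_eq_one_left hcab
    rw [e1, mul_inv_rev, mul_inv_rev, hiA, hiB, hiC]
    group
  have l1 : (A * B) * (B * C) = A * C := by
    calc A * B * (B * C) = A * (B * B) * C := by group
      _ = A * 1 * C := by rw [hB]
      _ = A * C := by group
  have l2 : (B * C) * (A * B) = A * C := by
    calc B * C * (A * B) = B * (C * A * B) := by group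
      _ = B * (B * A * C) := by rw [e3]
      _ = (B * B) * (A * C) := by group
      _ = 1 * (A * C) := by rw [hB]
      _ = A * C := one_mul _
  exact l1.trans l2.symm

theorem stmt_7 (m : ℤ) :
    let rels : Set (FreeGroup (Fin 5)) :=
      {FreeGroup.of 4 * FreeGroup.of 0 ^ (-2 : ℤ),
        FreeGroup.of 4 * FreeGroup.of 1 ^ (-2 : ℤ),
        FreeGroup.of 4 * FreeGroup.of 2 ^ (-2 : ℤ),
        FreeGroup.of 4 * FreeGroup.of 3 ^ (-2 : ℤ),
        FreeGroup.of 0 * FreeGroup.of 1 * FreeGroup.of 2 * FreeGroup.of 3 *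
          FreeGroup.of 4 ^ (-m)}
    let a : PresentedGroup rels := PresentedGroup.of 0
    let b : PresentedGroup rels := PresentedGroup.of 1
    let c : PresentedGroup rels := PresentedGroup.of 2
    let x : PresentedGroup rels := PresentedGroup.of 4
    let N : Subgroup (PresentedGroup rels) := Subgroup.closure {a * b, b * c, x}
    x ∈ Subgroup.center (PresentedGroup rels) ∧
      N.Normal ∧ N.index = 2 ∧
      ⁅N, N⁆ ≤ Subgroup.zpowers x ∧ derivedSeries ↥N 2 = ⊥ := by
  intro rels a b c x N
  let d : PresentedGroup rels := PresentedGroup.of 3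
  -- relations hold in the presented group
  have hrel : ∀ r ∈ rels, PresentedGroup.mk rels r = 1 := fun r hr =>
    (QuotientGroup.eq_one_iff r).mpr (Subgroup.subset_normalClosure hr)
  have h1 : x * a ^ (-2 : ℤ) = 1 := by
    have h := hrel _ (Set.mem_insert _ _)
    simp only [map_mul, map_zpow] at h
    exact h
  have h2 : x * b ^ (-2 : ℤ) = 1 := by
    have h := hrel _ (Set.mem_insert_iff.mpr (Or.inr (Set.mem_insert _ _)))
    simp only [map_mul, map_zpow] at h
    exact h
  have h3 : x * c ^ (-2 : ℤ) = 1 := by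
    have h := hrel _ (Set.mem_insert_iff.mpr (Or.inr (Set.mem_insert_iff.mpr
      (Or.inr (Set.mem_insert _ _)))))
    simp only [map_mul, map_zpow] at h
    exact h
  have h4 : x * d ^ (-2 : ℤ) = 1 := by
    have h := hrel _ (Set.mem_insert_iff.mpr (Or.inr (Set.mem_insert_iff.mpr
      (Or.inr (Set.mem_insert_iff.mpr (Or.inr (Set.mem_insert _ _)))))))
    simp only [map_mul, map_zpow] at h
    exact h
  have h5 : a * b * c * d * x ^ (-m) = 1 := by
    have h := hrel _ (Set.mem_insert_iff.mpr (Or.inr (Set.mem_insert_iff.mpr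
      (Or.inr (Set.mem_insert_iff.mpr (Or.inr (Set.mem_insert_iff.mpr
      (Or.inr (Set.mem_singleton _)))))))))
    simp only [map_mul, map_zpow] at h
    exact h
  -- squares
  have sq : ∀ u : PresentedGroup rels, x * u ^ (-2 : ℤ) = 1 → u * u = x := by
    intro u hu
    have : x = u * u := by
      calc x = x * u ^ (-2 : ℤ) * (u * u) := by group
        _ = 1 * (u * u) := by rw [hu]
        _ = u * u := one_mul _
    exact this.symm
  have haa : a * a = x := sq a h1
  have hbb : b * b = x := sq b h2
  have hcc : c * c = x := sq c h3
  have hdd : d * d = x := sq d h4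
  have habcd : a * b * c * d = x ^ m := by
    calc a * b * c * d = a * b * c * d * x ^ (-m) * x ^ m := by group
      _ = 1 * x ^ m := by rw [h5]
      _ = x ^ m := one_mul _
  -- (i) x is central
  have hcent : x ∈ Subgroup.center (PresentedGroup rels) := by
    rw [Subgroup.mem_center_iff]
    intro g
    have hg : g ∈ Subgroup.centralizer {x} := by
      refine PresentedGroup.generated_by rels _ (fun j => ?_) g
      rw [Subgroup.mem_centralizer_singleton_iff]
      fin_cases j
      · show a * x = x * a; rw [← haa]; group
      · show b * x = x * b; rw [← hbb]; group
      · show c * x = x * c; rw [← hcc]; group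
      · show d * x = x * d; rw [← hdd]; group
      · show x * x = x * x; rfl
    exact Subgroup.mem_centralizer_singleton_iff.mp hg
  -- commuting helpers
  have swap : ∀ (g : PresentedGroup rels) (k : ℤ), g * x ^ k = x ^ k * g := by
    intro g k
    have h : g * x = x * g := Subgroup.mem_center_iff.mp hcent g
    exact (Commute.zpow_right h k).eq
  -- basic memberships
  have habN : a * b ∈ N := Subgroup.subset_closure (Set.mem_insert _ _)
  have hbcN : b * c ∈ N := Subgroup.subset_closure
    (Set.mem_insert_iff.mpr (Or.inr (Set.mem_insert _ _)))
  have hxN : x ∈ N := Subgroup.subset_closure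
    (Set.mem_insert_iff.mpr (Or.inr (Set.mem_insert_iff.mpr (Or.inr (Set.mem_singleton _)))))
  have rev : ∀ u v : PresentedGroup rels, u * u = x → v * v = x → u * v ∈ N → v * u ∈ N := by
    intro u v hu hv huv
    have e : v * u = v * v * (u * v)⁻¹ * (u * u) := by group
    rw [e, hu, hv]
    exact mul_mem (mul_mem hxN (inv_mem huv)) hxN
  have step : ∀ u v w : PresentedGroup rels, v * v = x → u * v ∈ N → v * w ∈ N → u * w ∈ N := by
    intro u v w hv huv hvw
    have e : u * w = u * v * (v * v)⁻¹ * (v * w) := by group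
    rw [e, hv]
    exact mul_mem (mul_mem huv (inv_mem hxN)) hvw
  have haaN : a * a ∈ N := by rw [haa]; exact hxN
  have hbbN : b * b ∈ N := by rw [hbb]; exact hxN
  have hccN : c * c ∈ N := by rw [hcc]; exact hxN
  have hddN : d * d ∈ N := by rw [hdd]; exact hxN
  have hbaN := rev a b haa hbb habN
  have hcbN := rev b c hbb hcc hbcN
  have hacN := step a b c hbb habN hbcN
  have hcaN := rev a c haa hcc hacN
  have hcdN : c * d ∈ N := by
    have e : c * d = (a * b)⁻¹ * (a * b * c * d) := by group
    rw [e, habcd]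
    exact mul_mem (inv_mem habN) (Subgroup.zpow_mem N hxN m)
  have hdcN := rev c d hcc hdd hcdN
  have hbdN := step b c d hcc hbcN hcdN
  have hdbN := rev b d hbb hdd hbdN
  have hadN := step a b d hbb habN hbdN
  have hdaN := rev a d haa hdd hadN
  have hmemA : a ∈ ({a,b,c,d} : Set (PresentedGroup rels)) := Set.mem_insert _ _
  have hmemB : b ∈ ({a,b,c,d} : Set (PresentedGroup rels)) :=
    Set.mem_insert_iff.mpr (Or.inr (Set.mem_insert _ _))
  have hmemC : c ∈ ({a,b,c,d} : Set (PresentedGroup rels)) :=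
    Set.mem_insert_iff.mpr (Or.inr (Set.mem_insert_iff.mpr (Or.inr (Set.mem_insert _ _))))
  have hmemD : d ∈ ({a,b,c,d} : Set (PresentedGroup rels)) :=
    Set.mem_insert_iff.mpr (Or.inr (Set.mem_insert_iff.mpr (Or.inr
      (Set.mem_insert_iff.mpr (Or.inr (Set.mem_singleton _))))))
  have hpair : ∀ u ∈ ({a,b,c,d} : Set (PresentedGroup rels)),
      ∀ v ∈ ({a,b,c,d} : Set (PresentedGroup rels)), u * v ∈ N := by
    intro u hu v hv
    simp only [Set.mem_insert_iff, Set.mem_singleton_iff] at hu hv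
    rcases hu with rfl|rfl|rfl|rfl <;> rcases hv with rfl|rfl|rfl|rfl <;>
      first
      | exact haaN | exact habN | exact hacN | exact hadN
      | exact hbaN | exact hbbN | exact hbcN | exact hbdN
      | exact hcaN | exact hcbN | exact hccN | exact hcdN
      | exact hdaN | exact hdbN | exact hdcN | exact hddN
  have hsq : ∀ u ∈ ({a,b,c,d} : Set (PresentedGroup rels)), u * u = x := by
    intro u hu
    simp only [Set.mem_insert_iff, Set.mem_singleton_iff] at hu
    rcases hu with rfl|rfl|rfl|rfl
    exacts [haa, hbb, hcc, hdd]
  have conj_mem : ∀ u : PresentedGroup rels,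
      (∀ s ∈ ({a * b, b * c, x} : Set (PresentedGroup rels)), u * s * u⁻¹ ∈ N) →
      ∀ n ∈ N, u * n * u⁻¹ ∈ N := by
    intro u hu n hn
    refine Subgroup.closure_induction (fun s hs => hu s hs) ?_ ?_ ?_ hn
    · have e : u * 1 * u⁻¹ = (1 : PresentedGroup rels) := by group
      rw [e]; exact one_mem N
    · intro s t _ _ hs ht
      have e : u * (s * t) * u⁻¹ = (u * s * u⁻¹) * (u * t * u⁻¹) := by group
      rw [e]; exact mul_mem hs ht
    · intro s _ hs
      have e : u * s⁻¹ * u⁻¹ = (u * s * u⁻¹)⁻¹ := by group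
      rw [e]; exact inv_mem hs
  have conj_gen : ∀ u ∈ ({a,b,c,d} : Set (PresentedGroup rels)), ∀ n ∈ N, u * n * u⁻¹ ∈ N := by
    intro u hu
    have hu2 : u * u = x := hsq u hu
    refine conj_mem u ?_
    intro s hs
    simp only [Set.mem_insert_iff, Set.mem_singleton_iff] at hs
    rcases hs with rfl|rfl|rfl
    · have e : u * (a * b) * u⁻¹ = (u * a) * (b * u) * (u * u)⁻¹ := by group
      rw [e, hu2]
      exact mul_mem (mul_mem (hpair u hu a hmemA) (hpair b hmemB u hu)) (inv_mem hxN)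
    · have e : u * (b * c) * u⁻¹ = (u * b) * (c * u) * (u * u)⁻¹ := by group
      rw [e, hu2]
      exact mul_mem (mul_mem (hpair u hu b hmemB) (hpair c hmemC u hu)) (inv_mem hxN)
    · have e : u * x * u⁻¹ = x := by rw [← hu2]; group
      rw [e]; exact hxN
  have conj_gen_inv : ∀ u ∈ ({a,b,c,d} : Set (PresentedGroup rels)),
      ∀ n ∈ N, u⁻¹ * n * (u⁻¹)⁻¹ ∈ N := by
    intro u hu
    have hu2 : u * u = x := hsq u hu
    refine conj_mem u⁻¹ ?_
    intro s hs
    simp only [Set.mem_insert_iff, Set.mem_singleton_iff] at hs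
    rcases hs with rfl|rfl|rfl
    · have e : u⁻¹ * (a * b) * (u⁻¹)⁻¹ = (u * u)⁻¹ * ((u * a) * (b * u)) := by group
      rw [e, hu2]
      exact mul_mem (inv_mem hxN) (mul_mem (hpair u hu a hmemA) (hpair b hmemB u hu))
    · have e : u⁻¹ * (b * c) * (u⁻¹)⁻¹ = (u * u)⁻¹ * ((u * b) * (c * u)) := by group
      rw [e, hu2]
      exact mul_mem (inv_mem hxN) (mul_mem (hpair u hu b hmemB) (hpair c hmemC u hu))
    · have e : u⁻¹ * x * (u⁻¹)⁻¹ = x := by rw [← hu2]; group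
      rw [e]; exact hxN
  have hNnormal : N.Normal := by
    rw [← Subgroup.normalizer_eq_top_iff, eq_top_iff]
    intro g _
    refine PresentedGroup.generated_by rels (Subgroup.normalizer (N : Set (PresentedGroup rels))) (fun j => ?_) g
    have key : ∀ u ∈ ({a,b,c,d} : Set (PresentedGroup rels)), u ∈ Subgroup.normalizer (N : Set (PresentedGroup rels)) := by
      intro u hu
      rw [Subgroup.mem_normalizer_iff]
      intro n
      constructor
      · exact fun hn => conj_gen u hu n hn
      · intro hn
        have e : n = u⁻¹ * (u * n * u⁻¹) * (u⁻¹)⁻¹ := by group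
        rw [e]
        exact conj_gen_inv u hu _ hn
    fin_cases j
    · exact key a hmemA
    · exact key b hmemB
    · exact key c hmemC
    · exact key d hmemD
    · exact Subgroup.le_normalizer hxN
  -- homomorphism to Z/2
  have hf : ∀ r ∈ rels, FreeGroup.lift
      (fun i : Fin 5 => if i = 4 then (1 : Multiplicative (ZMod 2))
        else Multiplicative.ofAdd 1) r = 1 := by
    intro r hr
    have hr' : r ∈ ({FreeGroup.of 4 * FreeGroup.of 0 ^ (-2 : ℤ),
        FreeGroup.of 4 * FreeGroup.of 1 ^ (-2 : ℤ),
        FreeGroup.of 4 * FreeGroup.of 2 ^ (-2 : ℤ),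
        FreeGroup.of 4 * FreeGroup.of 3 ^ (-2 : ℤ),
        FreeGroup.of 0 * FreeGroup.of 1 * FreeGroup.of 2 * FreeGroup.of 3 *
          FreeGroup.of 4 ^ (-m)} : Set (FreeGroup (Fin 5))) := hr
    simp only [Set.mem_insert_iff, Set.mem_singleton_iff] at hr'
    rcases hr' with rfl|rfl|rfl|rfl|rfl <;>
      · simp [FreeGroup.lift_apply_of, one_zpow]
        try decide
  have hφa : PresentedGroup.toGroup hf a = Multiplicative.ofAdd (1 : ZMod 2) :=
    PresentedGroup.toGroup.of hf
  have hφb : PresentedGroup.toGroup hf b = Multiplicative.ofAdd (1 : ZMod 2) :=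
    PresentedGroup.toGroup.of hf
  have hφc : PresentedGroup.toGroup hf c = Multiplicative.ofAdd (1 : ZMod 2) :=
    PresentedGroup.toGroup.of hf
  have hφx : PresentedGroup.toGroup hf x = 1 :=
    PresentedGroup.toGroup.of hf
  have hNker : N ≤ (PresentedGroup.toGroup hf).ker := by
    refine (Subgroup.closure_le _).mpr ?_
    intro s hs
    simp only [Set.mem_insert_iff, Set.mem_singleton_iff] at hs
    rcases hs with rfl|rfl|rfl
    · rw [SetLike.mem_coe, MonoidHom.mem_ker, map_mul, hφa, hφb]; decide
    · rw [SetLike.mem_coe, MonoidHom.mem_ker, map_mul, hφb, hφc]; decide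
    · rw [SetLike.mem_coe, MonoidHom.mem_ker, hφx]
  have haN : a ∉ N := by
    intro hA
    have h1 := hNker hA
    rw [MonoidHom.mem_ker, hφa] at h1
    exact absurd h1 (by decide)
  -- quotient analysis
  haveI := hNnormal
  have hπone : ∀ g : PresentedGroup rels, g ∈ N → QuotientGroup.mk' N g = 1 := fun g hg =>
    (QuotientGroup.eq_one_iff g).mpr hg
  have hπa2 : QuotientGroup.mk' N a * QuotientGroup.mk' N a = 1 := by
    rw [← map_mul]; exact hπone _ haaN
  have hmemZ : ∀ g : PresentedGroup rels,
      QuotientGroup.mk' N g ∈ Subgroup.zpowers (QuotientGroup.mk' N a) := by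
    intro g
    refine Subgroup.mem_comap.mp
      (PresentedGroup.generated_by rels
        ((Subgroup.zpowers (QuotientGroup.mk' N a)).comap (QuotientGroup.mk' N))
        (fun j => ?_) g)
    fin_cases j
    · exact Subgroup.mem_comap.mpr (Subgroup.mem_zpowers _)
    · refine Subgroup.mem_comap.mpr ?_
      show QuotientGroup.mk' N b ∈ _
      have e : b = (b * a) * a⁻¹ := by group
      rw [e, map_mul, map_inv, hπone _ hbaN, one_mul]
      exact inv_mem (Subgroup.mem_zpowers _)
    · refine Subgroup.mem_comap.mpr ?_
      show QuotientGroup.mk' N c ∈ _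
      have e : c = (c * a) * a⁻¹ := by group
      rw [e, map_mul, map_inv, hπone _ hcaN, one_mul]
      exact inv_mem (Subgroup.mem_zpowers _)
    · refine Subgroup.mem_comap.mpr ?_
      show QuotientGroup.mk' N d ∈ _
      have e : d = (d * a) * a⁻¹ := by group
      rw [e, map_mul, map_inv, hπone _ hdaN, one_mul]
      exact inv_mem (Subgroup.mem_zpowers _)
    · refine Subgroup.mem_comap.mpr ?_
      show QuotientGroup.mk' N x ∈ _
      rw [hπone _ hxN]
      exact one_mem _
  have hdichotomy : ∀ g : PresentedGroup rels, g ∈ N ∨ g * a ∈ N := by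
    intro g
    obtain ⟨k, hk⟩ := Subgroup.mem_zpowers_iff.mp (hmemZ g)
    have hsq2 : QuotientGroup.mk' N a ^ (2 : ℤ) = 1 := by
      rw [show (2:ℤ) = 1 + 1 by norm_num, zpow_add, zpow_one]
      exact hπa2
    rcases Int.even_or_odd k with ⟨j, hj⟩ | ⟨j, hj⟩
    · left
      have h1 : QuotientGroup.mk' N g = 1 := by
        rw [← hk, show k = 2 * j by omega, zpow_mul, hsq2, one_zpow]
      exact (QuotientGroup.eq_one_iff g).mp h1
    · right
      have h1 : QuotientGroup.mk' N (g * a) = 1 := by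
        rw [map_mul, ← hk, show k = 2 * j + 1 by omega, zpow_add, zpow_mul, hsq2,
          one_zpow, zpow_one, one_mul]
        exact hπa2
      exact (QuotientGroup.eq_one_iff _).mp h1
  have hindex : N.index = 2 := by
    rw [Subgroup.index_eq_two_iff]
    refine ⟨a, fun g => ?_⟩
    rcases hdichotomy g with hg | hga
    · refine Or.inr ⟨hg, fun hP => ?_⟩
      have e : a = g⁻¹ * (g * a) := by group
      exact haN (by rw [e]; exact mul_mem (inv_mem hg) hP)
    · refine Or.inl ⟨hga, fun hQ => ?_⟩
      have e : a = g⁻¹ * (g * a) := by group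
      exact haN (by rw [e]; exact mul_mem (inv_mem hQ) hga)
  -- (iii) commutator subgroup inside zpowers of x
  haveI hZnormal : (Subgroup.zpowers x).Normal := by
    constructor
    intro n hn g
    obtain ⟨k, hk⟩ := Subgroup.mem_zpowers_iff.mp hn
    rw [← hk, swap g k, mul_inv_cancel_right]
    exact Subgroup.zpow_mem _ (Subgroup.mem_zpowers x) k
  have hρone : ∀ g ∈ Subgroup.zpowers x,
      QuotientGroup.mk' (Subgroup.zpowers x) g = 1 := fun g hg =>
    (QuotientGroup.eq_one_iff g).mpr hg
  set ρ := QuotientGroup.mk' (Subgroup.zpowers x) with hρdef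
  have hρsq : ∀ u ∈ ({a,b,c,d} : Set (PresentedGroup rels)), ρ u * ρ u = 1 := by
    intro u hu
    rw [← map_mul, hsq u hu]
    exact hρone _ (Subgroup.mem_zpowers x)
  have h6 : ρ a * ρ b * ρ c * ρ d = 1 := by
    rw [← map_mul, ← map_mul, ← map_mul, habcd]
    exact hρone _ (Subgroup.zpow_mem _ (Subgroup.mem_zpowers x) m)
  have hcommXY : ρ (a * b) * ρ (b * c) = ρ (b * c) * ρ (a * b) := by
    simp only [map_mul]
    exact stmt7_aux (hρsq a hmemA) (hρsq b hmemB) (hρsq c hmemC) (hρsq d hmemD) h6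
  have hMap : N.map ρ = Subgroup.closure (ρ '' {a * b, b * c, x}) :=
    MonoidHom.map_closure ρ _
  have hTcomm : ∀ s ∈ ρ '' ({a * b, b * c, x} : Set (PresentedGroup rels)),
      ∀ t ∈ ρ '' ({a * b, b * c, x} : Set (PresentedGroup rels)), Commute s t := by
    rintro s ⟨s0, hs0, rfl⟩ t ⟨t0, ht0, rfl⟩
    simp only [Set.mem_insert_iff, Set.mem_singleton_iff] at hs0 ht0
    have hx1 : ρ x = 1 := hρone _ (Subgroup.mem_zpowers x)
    rcases hs0 with rfl|rfl|rfl <;> rcases ht0 with rfl|rfl|rfl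
    · exact Commute.refl _
    · exact hcommXY
    · rw [hx1]; exact Commute.one_right _
    · exact hcommXY.symm
    · exact Commute.refl _
    · rw [hx1]; exact Commute.one_right _
    · rw [hx1]; exact Commute.one_left _
    · rw [hx1]; exact Commute.one_left _
    · exact Commute.refl _
  have hMcomm : ∀ g ∈ N.map ρ, ∀ h ∈ N.map ρ, Commute g h := by
    rw [hMap]
    intro g hg
    refine Subgroup.closure_induction ?_ ?_ ?_ ?_ hg
    · intro s hs h hh
      refine Subgroup.closure_induction ?_ ?_ ?_ ?_ hh
      · intro t ht; exact hTcomm s hs t ht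
      · exact Commute.one_right s
      · intro y z _ _ hy hz; exact hy.mul_right hz
      · intro y _ hy; exact hy.inv_right
    · intro h _; exact Commute.one_left h
    · intro y z _ _ hy hz h hh; exact (hy h hh).mul_left (hz h hh)
    · intro y _ hy h hh; exact (hy h hh).inv_left
  have hcommle : ⁅N, N⁆ ≤ Subgroup.zpowers x := by
    have hker : Subgroup.map ρ ⁅N, N⁆ = ⊥ := by
      rw [Subgroup.map_commutator, eq_bot_iff, Subgroup.commutator_le]
      intro g1 hg1 g2 hg2
      rw [Subgroup.mem_bot]
      exact commutatorElement_eq_one_iff_commute.mpr (hMcomm g1 hg1 g2 hg2)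
    have h2 := (Subgroup.map_eq_bot_iff _).mp hker
    rwa [hρdef, QuotientGroup.ker_mk'] at h2
  have hds : derivedSeries ↥N 2 = ⊥ := by
    have hmaple : (derivedSeries ↥N 2).map N.subtype ≤ ⊥ := by
      have e : (derivedSeries ↥N 2).map N.subtype = ⁅⁅N, N⁆, ⁅N, N⁆⁆ := by
        rw [show (2:ℕ) = 0 + 1 + 1 from rfl, derivedSeries_succ, derivedSeries_succ,
          derivedSeries_zero, Subgroup.map_commutator, Subgroup.map_commutator,
          ← MonoidHom.range_eq_map, Subgroup.range_subtype]
      rw [e]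
      refine le_trans (Subgroup.commutator_mono hcommle hcommle) ?_
      rw [Subgroup.commutator_le]
      intro g1 hg1 g2 hg2
      rw [Subgroup.mem_bot]
      obtain ⟨k1, hk1⟩ := Subgroup.mem_zpowers_iff.mp hg1
      obtain ⟨k2, hk2⟩ := Subgroup.mem_zpowers_iff.mp hg2
      refine commutatorElement_eq_one_iff_commute.mpr ?_
      rw [← hk1, ← hk2]
      exact (Commute.refl x).zpow_zpow k1 k2
    exact (Subgroup.map_eq_bot_iff_of_injective _ N.subtype_injective).mp (le_bot_iff.mp hmaple)
  exact ⟨hcent, hNnormal, hindex, hcommle, hds⟩
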